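/- Let X_1,...,X_n be real-valued random variables whose marginal distribution functions F_1,...,F_n are all regularly varying with the same index −α for some α > 0 (F_i ∈ 𝓡_{−α}), and whose joint distribution is given by a multivariate Farlie–Gumbel–Morgenstern copula: P(X_1 ≤ x_1,...,X_n ≤ x_n) = ∏_{i=1}^{n} F_i(x_i) · (1 + ∑_{k=2}^{n} ∑_{1≤j_1<...<j_k≤n} θ_{j_1...j_k} (1−F_{j_1})(x_{j_1}) ⋯ (1−F_{j_k})(x_{j_k})), where the real parameters θ satisfy |θ_{j_1...j_k}| ≤ 1 and the right-hand side is a proper multivariate distribution function (so that in particular P(X_i > s, X_j > t) = (1−F_i)(s)(1−F_j)(t)(1 + θ_{ij} F_i(s) F_j(t)) for all i ≠ j). Then: the maximum X_{n:n} belongs to 𝓡_{−α} (hence to 𝓛 ∩ 𝓓); and for every p ∈ (1/2, 1), the dominatedly varying function h(x) = x^p belongs to 𝓗_{X_{n:n}} and satisfies condition (DS1) for every t > 0 and condition (DS2) for L = 1; i.e. Assumptions B and C both hold for X_1,...,X_n. -/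

import Mathlib

open MeasureTheory Filter Topology Asymptotics

noncomputable section

/-- Tail probability `P(Y > x)` of a real random variable. -/
def tailP {Ω : Type*} [MeasurableSpace Ω] (μ : Measure Ω) (Y : Ω → ℝ) (x : ℝ) : ℝ :=
  (μ {ω | x < Y ω}).toReal

/-- The maximum `X_{n:n}` of finitely many random variables. -/
def maxRV {Ω : Type*} {n : ℕ} (X : Fin n → Ω → ℝ) (ω : Ω) : ℝ := ⨆ i, X i ω

/-- The `i`-th largest value (descending order statistic, `0`-indexed):
`ordDesc X i = X_{n-i:n}`. -/
def ordDesc {Ω : Type*} {n : ℕ} (X : Fin n → Ω → ℝ) (i : Fin n) (ω : Ω) : ℝ :=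
  (((List.ofFn fun j => X j ω).mergeSort fun a b => decide (b ≤ a)).getD i 0)

/-- A tail function `T = 1 - F` is long-tailed (`F ∈ 𝓛`). -/
def LongTailedT (T : ℝ → ℝ) : Prop :=
  (∀ x : ℝ, 0 ≤ x → 0 < T x) ∧
  ∀ y : ℝ, Tendsto (fun x => T (x + y) / T x) atTop (𝓝 1)

/-- A function is dominatedly varying. -/
def DomVarFun (h : ℝ → ℝ) : Prop :=
  ∀ y : ℝ, 0 < y →
    (0 : EReal) < atTop.liminf (fun x => ((h (x * y) / h x : ℝ) : EReal)) ∧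
    atTop.limsup (fun x => ((h (x * y) / h x : ℝ) : EReal)) < ⊤

/-- A function is weakly self-neglecting. -/
def WeaklySelfNeg (h : ℝ → ℝ) : Prop :=
  ∀ y : ℝ, atTop.limsup (fun x => ((h (x + y * h x) / h x : ℝ) : EReal)) < ⊤

/-- `h ∈ 𝓗_F` where `T = 1 - F` is the tail of `F`. -/
def MemScaleClass (T h : ℝ → ℝ) : Prop :=
  (∀ᶠ x in atTop, 0 < h x) ∧
  (h =o[atTop] fun x : ℝ => x) ∧
  (∀ y : ℝ, Tendsto (fun x => T (x + y * h x) / T x) atTop (𝓝 1)) ∧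
  WeaklySelfNeg h

/-- Upper endpoint `x_F = sup {x : F(x) < 1}` of a distribution with tail `T = 1 - F`. -/
def upEnd (T : ℝ → ℝ) : EReal := sSup ((fun x : ℝ => (x : EReal)) '' {x | 0 < T x})

open Classical in
/-- The filter of "`x → x_F`". -/
def endFilter (T : ℝ → ℝ) : Filter ℝ :=
  if upEnd T = ⊤ then atTop else 𝓝[<] (upEnd T).toReal

/-- `F ∈ GMDA(h)` for `T = 1 - F`. -/
def MemGMDA (T h : ℝ → ℝ) : Prop :=
  (∀ x, 0 < h x) ∧
  ∀ y : ℝ, Tendsto (fun x => T (x + y * h x) / T x) (endFilter T) (𝓝 (Real.exp (-y)))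

/-- Condition (DS1) (for all `t > 0`). -/
def DS1 {Ω : Type*} [MeasurableSpace Ω] (μ : Measure Ω) {n : ℕ} (X : Fin n → Ω → ℝ)
    (h : ℝ → ℝ) : Prop :=
  ∀ t : ℝ, 0 < t → ∀ i j : Fin n, i ≠ j →
    Tendsto (fun x => (μ {ω | t * h x < |X i ω| ∧ x < X j ω}).toReal / tailP μ (maxRV X) x)
      atTop (𝓝 0)

/-- Condition (DS2) for a given `L > 0`. -/
def DS2 {Ω : Type*} [MeasurableSpace Ω] (μ : Measure Ω) {n : ℕ} (X : Fin n → Ω → ℝ)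
    (h : ℝ → ℝ) (L : ℝ) : Prop :=
  ∀ i j : Fin n, i < j →
    Tendsto (fun x => (μ {ω | L * h x < X i ω ∧ L * h x < X j ω}).toReal / tailP μ (maxRV X) x)
      atTop (𝓝 0)

/-- Condition (v1). -/
def CondV1 {Ω : Type*} [MeasurableSpace Ω] (μ : Measure Ω) {n : ℕ} (X : Fin n → Ω → ℝ) : Prop :=
  ∀ i j : Fin n, i < j →
    Tendsto (fun x => (μ {ω | x < X i ω ∧ x < X j ω}).toReal / tailP μ (maxRV X) x)
      atTop (𝓝 0)

/-- Assumption A: `X_{n:n}` has an infinite upper endpoint, `X_{n:n} ∈ GMDA(h)`,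
(DS1) holds for all `t > 0` and (DS2) for some `L > 0`. -/
def AssumptionA {Ω : Type*} [MeasurableSpace Ω] (μ : Measure Ω) {n : ℕ}
    (X : Fin n → Ω → ℝ) : Prop :=
  ∃ h : ℝ → ℝ,
    (∀ x : ℝ, 0 < tailP μ (maxRV X) x) ∧
    MemGMDA (tailP μ (maxRV X)) h ∧
    DS1 μ X h ∧ ∃ L : ℝ, 0 < L ∧ DS2 μ X h L

/-- Assumption B: `X_{n:n} ∈ 𝓛` and some `h ∈ 𝓗_{X_{n:n}}` satisfies (DS1) for all `t > 0`
and (DS2) for some `L > 0`. -/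
def AssumptionB {Ω : Type*} [MeasurableSpace Ω] (μ : Measure Ω) {n : ℕ}
    (X : Fin n → Ω → ℝ) : Prop :=
  LongTailedT (tailP μ (maxRV X)) ∧
  ∃ h : ℝ → ℝ, MemScaleClass (tailP μ (maxRV X)) h ∧
    DS1 μ X h ∧ ∃ L : ℝ, 0 < L ∧ DS2 μ X h L

/-- Assumption C: `X_{n:n} ∈ 𝓛 ∩ 𝓓` and some dominatedly varying `h ∈ 𝓗_{X_{n:n}}`
satisfies (DS1) for all `t > 0`. -/
def AssumptionC {Ω : Type*} [MeasurableSpace Ω] (μ : Measure Ω) {n : ℕ}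
    (X : Fin n → Ω → ℝ) : Prop :=
  LongTailedT (tailP μ (maxRV X)) ∧ DomVarFun (tailP μ (maxRV X)) ∧
  ∃ h : ℝ → ℝ, DomVarFun h ∧ MemScaleClass (tailP μ (maxRV X)) h ∧ DS1 μ X h

/-- The uniform (in the weights `c ∈ K`) max-sum asymptotic equivalence (max-sum0):
`P(∑ c_i X_{n-i:n} > x) ~ P(c_0 X_{n:n} > x) ~ ∑ P(c_0 X_i > x)` uniformly on `K`. -/
def UnifMaxSum {Ω : Type*} [MeasurableSpace Ω] (μ : Measure Ω) {n : ℕ} [NeZero n]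
    (X : Fin n → Ω → ℝ) (K : Set (Fin n → ℝ)) : Prop :=
  TendstoUniformlyOn
    (fun x (c : Fin n → ℝ) =>
      tailP μ (fun ω => ∑ i, c i * ordDesc X i ω) x /
        tailP μ (fun ω => c 0 * maxRV X ω) x) 1 atTop K ∧
  TendstoUniformlyOn
    (fun x (c : Fin n → ℝ) =>
      tailP μ (fun ω => c 0 * maxRV X ω) x /
        ∑ i, tailP μ (fun ω => c 0 * X i ω) x) 1 atTop K

end

/-- A tail function is regularly varying with index `-α`. -/
def RegVarTail (T : ℝ → ℝ) (α : ℝ) : Prop :=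
  ∀ y : ℝ, 0 < y → Tendsto (fun x => T (x * y) / T x) atTop (𝓝 (y ^ (-α)))

section AuxLemmas

lemma aux_exists_eps {α δ : ℝ} (hα : 0 < α) (hδ : 0 < δ) :
    ∃ ε : ℝ, 0 < ε ∧ ε < 1/2 ∧ (1 - ε) ^ (-α) < 1 + δ ∧ 1 - δ < (1 + ε) ^ (-α) := by
  have hc1 : Tendsto (fun ε : ℝ => (1 - ε) ^ (-α)) (𝓝 0) (𝓝 1) := by
    have h : ContinuousAt (fun ε : ℝ => (1 - ε) ^ (-α)) 0 := by
      apply ContinuousAt.rpow_const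
      · exact (continuous_const.sub continuous_id).continuousAt
      · left; norm_num
    have := h.tendsto
    simpa using this
  have hc2 : Tendsto (fun ε : ℝ => (1 + ε) ^ (-α)) (𝓝 0) (𝓝 1) := by
    have h : ContinuousAt (fun ε : ℝ => (1 + ε) ^ (-α)) 0 := by
      apply ContinuousAt.rpow_const
      · exact (continuous_const.add continuous_id).continuousAt
      · left; norm_num
    have := h.tendsto
    simpa using this
  have h1 : ∀ᶠ ε in 𝓝 (0:ℝ), (1 - ε) ^ (-α) < 1 + δ :=
    hc1.eventually_lt_const (by linarith)
  have h2 : ∀ᶠ ε in 𝓝 (0:ℝ), 1 - δ < (1 + ε) ^ (-α) :=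
    hc2.eventually_const_lt (by linarith)
  have h3 : ∀ᶠ ε in 𝓝 (0:ℝ), ε < 1/2 := eventually_lt_nhds (by norm_num)
  have h4 : ∀ᶠ ε in 𝓝[>] (0:ℝ), 0 < ε := self_mem_nhdsWithin
  have := (((h1.and h2).and h3).filter_mono nhdsWithin_le_nhds).and h4
  obtain ⟨ε, ⟨⟨hε1, hε2⟩, hε3⟩, hε4⟩ := this.exists
  exact ⟨ε, hε4, hε3, hε1, hε2⟩

lemma regvar_ratio_tendsto_one {T : ℝ → ℝ} (hanti : Antitone T) (hpos : ∀ x, 0 < T x)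
    {α : ℝ} (hα : 0 < α) (hreg : RegVarTail T α) {u : ℝ → ℝ}
    (hu : Tendsto (fun x => u x / x) atTop (𝓝 0)) :
    Tendsto (fun x => T (x + u x) / T x) atTop (𝓝 1) := by
  rw [Metric.tendsto_nhds]
  intro δ hδ
  obtain ⟨ε, hε0, hε2, hub, hlb⟩ := aux_exists_eps hα hδ
  have h1 : ∀ᶠ x in atTop, |u x / x| < ε := by
    have := Metric.tendsto_nhds.mp hu ε hε0
    simpa only [Real.dist_eq, sub_zero] using this
  have h2' : ∀ᶠ x in atTop, T (x * (1 - ε)) / T x < 1 + δ :=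
    (hreg (1 - ε) (by linarith)).eventually_lt_const hub
  have h3' : ∀ᶠ x in atTop, 1 - δ < T (x * (1 + ε)) / T x :=
    (hreg (1 + ε) (by linarith)).eventually_const_lt hlb
  filter_upwards [h1, h2', h3', eventually_gt_atTop 0] with x hx1 hx2 hx3 hx0
  have hxne : x ≠ 0 := ne_of_gt hx0
  have habs : |u x| < ε * x := by
    have : |u x| / x < ε := by rwa [abs_div, abs_of_pos hx0] at hx1
    calc |u x| = |u x| / x * x := by field_simp
    _ < ε * x := by exact mul_lt_mul_of_pos_right this hx0
  have hb := abs_lt.mp habs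
  have hl : x * (1 - ε) ≤ x + u x := by nlinarith
  have hr : x + u x ≤ x * (1 + ε) := by nlinarith
  have e1 : T (x + u x) / T x ≤ T (x * (1 - ε)) / T x := by
    gcongr
    · exact (hpos x).le
    · exact hanti hl
  have e2 : T (x * (1 + ε)) / T x ≤ T (x + u x) / T x := by
    gcongr
    · exact (hpos x).le
    · exact hanti hr
  rw [Real.dist_eq, abs_lt]
  constructor <;> nlinarith

lemma regvar_pos {T : ℝ → ℝ} (hanti : Antitone T) (hnn : ∀ x, 0 ≤ T x) {α : ℝ} (hα : 0 < α)
    (hreg : RegVarTail T α) : ∀ x, 0 < T x := by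
  by_contra h
  push_neg at h
  obtain ⟨x₀, hx₀⟩ := h
  have hz : T x₀ = 0 := le_antisymm hx₀ (hnn x₀)
  have hzero : ∀ x, x₀ ≤ x → T x = 0 := fun x hx => le_antisymm (hz ▸ hanti hx) (hnn x)
  have hev : ∀ᶠ x in atTop, T (x * 2) / T x = 0 := by
    filter_upwards [eventually_ge_atTop x₀, eventually_ge_atTop 0] with x hx hx0
    rw [hzero x hx, div_zero]
  have h0 : Tendsto (fun x => T (x * 2) / T x) atTop (𝓝 0) :=
    Tendsto.congr' (by filter_upwards [hev] with x h using h.symm) tendsto_const_nhds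
  have huniq : ((2:ℝ) ^ (-α)) = 0 := tendsto_nhds_unique (hreg 2 two_pos) h0
  exact absurd huniq (ne_of_gt (Real.rpow_pos_of_pos two_pos _))

lemma potter_upper {T : ℝ → ℝ} (hanti : Antitone T) (hpos : ∀ x, 0 < T x)
    {α : ℝ} (hreg : RegVarTail T α) {ε : ℝ} (hε : 0 < ε) (hεα : ε < α) :
    ∃ C > 0, ∀ᶠ x in atTop, T x ≤ C * x ^ (ε - α) := by
  set ρ : ℝ := 2 ^ (ε - α) with hρdef
  have hρpos : 0 < ρ := Real.rpow_pos_of_pos two_pos _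
  have hρgt : (2:ℝ) ^ (-α) < ρ := by
    apply (Real.rpow_lt_rpow_left_iff one_lt_two).mpr; linarith
  obtain ⟨x₀, hx₀⟩ := eventually_atTop.mp
    (((hreg 2 two_pos).eventually_lt_const hρgt).and (eventually_ge_atTop 1))
  have hx₀1 : (1:ℝ) ≤ x₀ := (hx₀ x₀ le_rfl).2
  have hx₀pos : (0:ℝ) < x₀ := lt_of_lt_of_le one_pos hx₀1
  have hstep : ∀ x, x₀ ≤ x → T (x * 2) ≤ ρ * T x := by
    intro x hx
    exact le_of_lt ((div_lt_iff₀ (hpos x)).mp (hx₀ x hx).1)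
  have hiter : ∀ k : ℕ, T (2 ^ k * x₀) ≤ ρ ^ k * T x₀ := by
    intro k
    induction k with
    | zero => simp
    | succ k ih =>
      have hge : x₀ ≤ 2 ^ k * x₀ :=
        le_mul_of_one_le_left hx₀pos.le (one_le_pow₀ one_le_two)
      calc T (2 ^ (k+1) * x₀) = T ((2 ^ k * x₀) * 2) := by ring_nf
      _ ≤ ρ * T (2 ^ k * x₀) := hstep _ hge
      _ ≤ ρ * (ρ ^ k * T x₀) := by
          exact mul_le_mul_of_nonneg_left ih hρpos.le
      _ = ρ ^ (k+1) * T x₀ := by ring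
  refine ⟨T x₀ * (2 * x₀) ^ (α - ε),
    mul_pos (hpos x₀) (Real.rpow_pos_of_pos (by positivity) _), ?_⟩
  filter_upwards [eventually_ge_atTop x₀] with x hx
  have hxpos : 0 < x := lt_of_lt_of_le hx₀pos hx
  have hxx : 1 ≤ x / x₀ := (one_le_div hx₀pos).mpr hx
  set k : ℕ := ⌊Real.logb 2 (x / x₀)⌋₊ with hkdef
  have hlogb0 : 0 ≤ Real.logb 2 (x / x₀) := Real.logb_nonneg one_lt_two hxx
  have hk1 : (2:ℝ) ^ k ≤ x / x₀ := by
    calc (2:ℝ) ^ k = 2 ^ ((k:ℝ)) := (Real.rpow_natCast 2 k).symm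
    _ ≤ 2 ^ (Real.logb 2 (x / x₀)) :=
        (Real.rpow_le_rpow_left_iff one_lt_two).mpr (Nat.floor_le hlogb0)
    _ = x / x₀ := Real.rpow_logb (by positivity) (by norm_num) (by positivity)
  have hk2 : x / x₀ < (2:ℝ) ^ (k + 1) := by
    calc x / x₀ = 2 ^ (Real.logb 2 (x / x₀)) :=
          (Real.rpow_logb (by positivity) (by norm_num) (by positivity)).symm
    _ < 2 ^ (((k:ℝ) + 1)) := by
        apply (Real.rpow_lt_rpow_left_iff one_lt_two).mpr
        exact Nat.lt_floor_add_one _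
    _ = (2:ℝ) ^ (k + 1) := by
        rw [show ((k:ℝ) + 1) = ((k + 1 : ℕ) : ℝ) by push_cast; ring, Real.rpow_natCast]
  have hkx : (2:ℝ) ^ k * x₀ ≤ x := by
    rw [← le_div_iff₀ hx₀pos]; exact hk1
  have h1 : T x ≤ ρ ^ k * T x₀ := le_trans (hanti hkx) (hiter k)
  have h2 : ρ ^ k = ((2:ℝ) ^ k) ^ (ε - α) := by
    rw [hρdef, ← Real.rpow_natCast (2 ^ (ε - α)) k, ← Real.rpow_natCast 2 k,
      ← Real.rpow_mul (by norm_num), ← Real.rpow_mul (by norm_num), mul_comm]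
  have hhalf : x / (2 * x₀) < (2:ℝ) ^ k := by
    have h2k1 : ((2:ℝ) ^ (k + 1)) = 2 * 2 ^ k := by ring
    rw [div_lt_iff₀ (by positivity)]
    calc x = x / x₀ * x₀ := by field_simp
    _ < 2 ^ (k+1) * x₀ := by exact mul_lt_mul_of_pos_right hk2 hx₀pos
    _ = 2 ^ k * (2 * x₀) := by ring
  have h3 : ((2:ℝ) ^ k) ^ (ε - α) ≤ (x / (2 * x₀)) ^ (ε - α) :=
    Real.rpow_le_rpow_of_nonpos (by positivity) hhalf.le (by linarith)
  have h4 : (x / (2 * x₀)) ^ (ε - α) = (2 * x₀) ^ (α - ε) * x ^ (ε - α) := by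
    rw [Real.div_rpow hxpos.le (by positivity), div_eq_mul_inv, ← Real.rpow_neg (by positivity),
      show -(ε - α) = α - ε by ring, mul_comm]
  calc T x ≤ ρ ^ k * T x₀ := h1
  _ = T x₀ * ((2:ℝ) ^ k) ^ (ε - α) := by rw [h2]; ring
  _ ≤ T x₀ * ((x / (2 * x₀)) ^ (ε - α)) := by
      exact mul_le_mul_of_nonneg_left h3 (hpos x₀).le
  _ = T x₀ * (2 * x₀) ^ (α - ε) * x ^ (ε - α) := by rw [h4]; ring

lemma potter_lower {T : ℝ → ℝ} (hanti : Antitone T) (hpos : ∀ x, 0 < T x)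
    {α : ℝ} (hα : 0 < α) (hreg : RegVarTail T α) {ε : ℝ} (hε : 0 < ε) :
    ∃ c > 0, ∀ᶠ x in atTop, c * x ^ (-(α + ε)) ≤ T x := by
  set ρ : ℝ := 2 ^ (-(α + ε)) with hρdef
  have hρpos : 0 < ρ := Real.rpow_pos_of_pos two_pos _
  have hρlt : ρ < (2:ℝ) ^ (-α) := by
    apply (Real.rpow_lt_rpow_left_iff one_lt_two).mpr; linarith
  obtain ⟨x₀, hx₀⟩ := eventually_atTop.mp
    (((hreg 2 two_pos).eventually_const_lt hρlt).and (eventually_ge_atTop 1))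
  have hx₀1 : (1:ℝ) ≤ x₀ := (hx₀ x₀ le_rfl).2
  have hx₀pos : (0:ℝ) < x₀ := lt_of_lt_of_le one_pos hx₀1
  have hstep : ∀ x, x₀ ≤ x → ρ * T x ≤ T (x * 2) := by
    intro x hx
    exact le_of_lt ((lt_div_iff₀ (hpos x)).mp (hx₀ x hx).1)
  have hiter : ∀ k : ℕ, ρ ^ k * T x₀ ≤ T (2 ^ k * x₀) := by
    intro k
    induction k with
    | zero => simp
    | succ k ih =>
      have hge : x₀ ≤ 2 ^ k * x₀ :=
        le_mul_of_one_le_left hx₀pos.le (one_le_pow₀ one_le_two)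
      calc ρ ^ (k+1) * T x₀ = ρ * (ρ ^ k * T x₀) := by ring
      _ ≤ ρ * T (2 ^ k * x₀) := mul_le_mul_of_nonneg_left ih hρpos.le
      _ ≤ T ((2 ^ k * x₀) * 2) := hstep _ hge
      _ = T (2 ^ (k+1) * x₀) := by ring_nf
  refine ⟨T x₀ * (2 / x₀) ^ (-(α + ε)),
    mul_pos (hpos x₀) (Real.rpow_pos_of_pos (by positivity) _), ?_⟩
  filter_upwards [eventually_ge_atTop x₀] with x hx
  have hxpos : 0 < x := lt_of_lt_of_le hx₀pos hx
  have hxx : 1 ≤ x / x₀ := (one_le_div hx₀pos).mpr hx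
  set k : ℕ := ⌊Real.logb 2 (x / x₀)⌋₊ with hkdef
  have hlogb0 : 0 ≤ Real.logb 2 (x / x₀) := Real.logb_nonneg one_lt_two hxx
  have hk1 : (2:ℝ) ^ k ≤ x / x₀ := by
    calc (2:ℝ) ^ k = 2 ^ ((k:ℝ)) := (Real.rpow_natCast 2 k).symm
    _ ≤ 2 ^ (Real.logb 2 (x / x₀)) :=
        (Real.rpow_le_rpow_left_iff one_lt_two).mpr (Nat.floor_le hlogb0)
    _ = x / x₀ := Real.rpow_logb (by positivity) (by norm_num) (by positivity)
  have hk2 : x / x₀ < (2:ℝ) ^ (k + 1) := by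
    calc x / x₀ = 2 ^ (Real.logb 2 (x / x₀)) :=
          (Real.rpow_logb (by positivity) (by norm_num) (by positivity)).symm
    _ < 2 ^ (((k:ℝ) + 1)) := by
        apply (Real.rpow_lt_rpow_left_iff one_lt_two).mpr
        exact Nat.lt_floor_add_one _
    _ = (2:ℝ) ^ (k + 1) := by
        rw [show ((k:ℝ) + 1) = ((k + 1 : ℕ) : ℝ) by push_cast; ring, Real.rpow_natCast]
  have hkx : x ≤ (2:ℝ) ^ (k + 1) * x₀ := by
    rw [← div_le_iff₀ hx₀pos]; exact hk2.le
  have h1 : ρ ^ (k + 1) * T x₀ ≤ T x := le_trans (hiter (k+1)) (hanti hkx)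
  have h2 : ρ ^ (k + 1) = ((2:ℝ) ^ (k + 1)) ^ (-(α + ε)) := by
    rw [hρdef, ← Real.rpow_natCast (2 ^ (-(α + ε))) (k + 1), ← Real.rpow_natCast 2 (k + 1),
      ← Real.rpow_mul (by norm_num), ← Real.rpow_mul (by norm_num), mul_comm]
  have hup : ((2:ℝ) ^ (k + 1)) ≤ 2 * (x / x₀) := by
    calc ((2:ℝ) ^ (k + 1)) = 2 * 2 ^ k := by ring
    _ ≤ 2 * (x / x₀) := by linarith
  have h3 : (2 * (x / x₀)) ^ (-(α + ε)) ≤ ((2:ℝ) ^ (k + 1)) ^ (-(α + ε)) :=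
    Real.rpow_le_rpow_of_nonpos (by positivity) hup (by linarith)
  have h4 : (2 * (x / x₀)) ^ (-(α + ε)) = (2 / x₀) ^ (-(α + ε)) * x ^ (-(α + ε)) := by
    rw [show 2 * (x / x₀) = (2 / x₀) * x by ring,
      Real.mul_rpow (by positivity) hxpos.le]
  calc T x₀ * (2 / x₀) ^ (-(α + ε)) * x ^ (-(α + ε))
      = T x₀ * ((2 * (x / x₀)) ^ (-(α + ε))) := by rw [h4]; ring
  _ ≤ T x₀ * (((2:ℝ) ^ (k + 1)) ^ (-(α + ε))) := mul_le_mul_of_nonneg_left h3 (hpos x₀).le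
  _ = ρ ^ (k + 1) * T x₀ := by rw [h2]; ring
  _ ≤ T x := h1

lemma regvar_tendsto_zero {T : ℝ → ℝ} (hanti : Antitone T) (hpos : ∀ x, 0 < T x)
    {α : ℝ} (hα : 0 < α) (hreg : RegVarTail T α) : Tendsto T atTop (𝓝 0) := by
  obtain ⟨C, hC, hCev⟩ := potter_upper hanti hpos hreg (ε := α / 2) (by linarith) (by linarith)
  apply squeeze_zero' (Eventually.of_forall fun x => (hpos x).le) hCev
  have : Tendsto (fun x : ℝ => x ^ (-(α / 2))) atTop (𝓝 0) := tendsto_rpow_neg_atTop (by linarith)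
  have h2 := this.const_mul C
  rw [mul_zero] at h2
  refine h2.congr fun x => ?_
  rw [show α / 2 - α = -(α / 2) by ring]

lemma tendsto_sum_div_sum {ι : Type*} (s : Finset ι) (hs : s.Nonempty) (f g : ι → ℝ → ℝ)
    (c : ℝ) (hg : ∀ i ∈ s, ∀ x, 0 < g i x)
    (h : ∀ i ∈ s, Tendsto (fun x => f i x / g i x) atTop (𝓝 c)) :
    Tendsto (fun x => (∑ i ∈ s, f i x) / (∑ i ∈ s, g i x)) atTop (𝓝 c) := by
  rw [Metric.tendsto_nhds]
  intro δ hδ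
  have hev : ∀ᶠ x in atTop, ∀ i ∈ s, |f i x / g i x - c| < δ / 2 := by
    rw [eventually_all_finset]
    intro i hi
    have := Metric.tendsto_nhds.mp (h i hi) (δ / 2) (by linarith)
    simpa [Real.dist_eq] using this
  filter_upwards [hev] with x hx
  have hgpos : 0 < ∑ i ∈ s, g i x := Finset.sum_pos (fun i hi => hg i hi x) hs
  have key : |(∑ i ∈ s, f i x) - c * (∑ i ∈ s, g i x)| ≤ δ / 2 * (∑ i ∈ s, g i x) := by
    rw [Finset.mul_sum, ← Finset.sum_sub_distrib]
    calc |∑ i ∈ s, (f i x - c * g i x)| ≤ ∑ i ∈ s, |f i x - c * g i x| :=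
          Finset.abs_sum_le_sum_abs _ _
    _ ≤ ∑ i ∈ s, δ / 2 * g i x := by
        apply Finset.sum_le_sum
        intro i hi
        have hgix := hg i hi x
        have : f i x - c * g i x = (f i x / g i x - c) * g i x := by field_simp
        rw [this, abs_mul, abs_of_pos hgix]
        exact mul_le_mul_of_nonneg_right (hx i hi).le hgix.le
    _ = δ / 2 * (∑ i ∈ s, g i x) := by rw [Finset.mul_sum]
  rw [Real.dist_eq]
  have : (∑ i ∈ s, f i x) / (∑ i ∈ s, g i x) - c
      = ((∑ i ∈ s, f i x) - c * (∑ i ∈ s, g i x)) / (∑ i ∈ s, g i x) := by field_simp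
  rw [this, abs_div, abs_of_pos hgpos, div_lt_iff₀ hgpos]
  calc |(∑ i ∈ s, f i x) - c * (∑ i ∈ s, g i x)| ≤ δ / 2 * (∑ i ∈ s, g i x) := key
  _ < δ * (∑ i ∈ s, g i x) := by
      apply mul_lt_mul_of_pos_right _ hgpos
      linarith

lemma one_sub_sum_le_prod_one_sub {ι : Type*} (s : Finset ι) (t : ι → ℝ)
    (h0 : ∀ i ∈ s, 0 ≤ t i) (h1 : ∀ i ∈ s, t i ≤ 1) :
    1 - ∑ i ∈ s, t i ≤ ∏ i ∈ s, (1 - t i) := by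
  induction s using Finset.cons_induction with
  | empty => simp
  | cons a s ha ih =>
    rw [Finset.prod_cons, Finset.sum_cons]
    have h0' : ∀ i ∈ s, 0 ≤ t i := fun i hi => h0 i (Finset.mem_cons_of_mem hi)
    have h1' : ∀ i ∈ s, t i ≤ 1 := fun i hi => h1 i (Finset.mem_cons_of_mem hi)
    have hih := ih h0' h1'
    have hP1 : ∏ i ∈ s, (1 - t i) ≤ 1 :=
      Finset.prod_le_one (fun i hi => by linarith [h1' i hi]) (fun i hi => by linarith [h0' i hi])
    have hP0 : 0 ≤ ∏ i ∈ s, (1 - t i) :=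
      Finset.prod_nonneg (fun i hi => by linarith [h1' i hi])
    have ha0 := h0 a (Finset.mem_cons_self a s)
    have ha1 := h1 a (Finset.mem_cons_self a s)
    nlinarith

lemma tendsto_coe_ereal_liminf_limsup {f : ℝ → ℝ} {c : ℝ} (h : Tendsto f atTop (𝓝 c)) :
    atTop.liminf (fun x => ((f x : ℝ) : EReal)) = (c : EReal) ∧
    atTop.limsup (fun x => ((f x : ℝ) : EReal)) = (c : EReal) := by
  have h' : Tendsto (fun x => ((f x : ℝ) : EReal)) atTop (𝓝 ((c : ℝ) : EReal)) :=
    (continuous_coe_real_ereal.tendsto c).comp h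
  exact ⟨h'.liminf_eq, h'.limsup_eq⟩

end AuxLemmas


set_option maxHeartbeats 2000000 in
/-- Example 4.2: risks with regularly varying marginals coupled by a
multivariate Farlie–Gumbel–Morgenstern copula satisfy Assumptions B and C, with
`h(x) = x^p` for any `p ∈ (1/2, 1)` and `L = 1`. -/
theorem fgm_copula_satisfies_assumptions_B_and_C
    {Ω : Type*} [MeasurableSpace Ω] (μ : Measure Ω) [IsProbabilityMeasure μ]
    {n : ℕ} [NeZero n] (X : Fin n → Ω → ℝ) (hXm : ∀ i, Measurable (X i))
    (F : Fin n → ℝ → ℝ) (hF : ∀ i x, F i x = (μ {ω | X i ω ≤ x}).toReal)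
    (α : ℝ) (hα : 0 < α)
    (hreg : ∀ i, RegVarTail (tailP μ (X i)) α)
    (θ : Finset (Fin n) → ℝ) (hθ : ∀ S, |θ S| ≤ 1)
    (hjoint : ∀ xv : Fin n → ℝ,
      (μ {ω | ∀ i, X i ω ≤ xv i}).toReal =
        (∏ i, F i (xv i)) *
          (1 + ∑ S ∈ Finset.univ.powerset.filter (fun S : Finset (Fin n) => 2 ≤ S.card),
            θ S * ∏ j ∈ S, (1 - F j (xv j))))
    (hpair : ∀ i j : Fin n, i ≠ j → ∀ s t : ℝ,
      (μ {ω | s < X i ω ∧ t < X j ω}).toReal =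
        tailP μ (X i) s * tailP μ (X j) t * (1 + θ {i, j} * F i s * F j t)) :
    RegVarTail (tailP μ (maxRV X)) α ∧
    LongTailedT (tailP μ (maxRV X)) ∧
    DomVarFun (tailP μ (maxRV X)) ∧
    ∀ p : ℝ, 1 / 2 < p → p < 1 →
      DomVarFun (fun x => x ^ p) ∧
      MemScaleClass (tailP μ (maxRV X)) (fun x => x ^ p) ∧
      DS1 μ X (fun x => x ^ p) ∧
      DS2 μ X (fun x => x ^ p) 1 := by
  haveI : Nonempty (Fin n) := Fin.pos_iff_nonempty.mp (Nat.pos_of_ne_zero (NeZero.ne n))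
  -- basic facts about tail probabilities
  have tail_anti : ∀ Y : Ω → ℝ, Antitone (tailP μ Y) := by
    intro Y a b hab
    apply ENNReal.toReal_mono (measure_ne_top μ _)
    exact measure_mono fun ω hω => lt_of_le_of_lt hab hω
  have tail_nonneg : ∀ (Y : Ω → ℝ) (x : ℝ), 0 ≤ tailP μ Y x := fun Y x => ENNReal.toReal_nonneg
  have tail_le_one : ∀ (Y : Ω → ℝ) (x : ℝ), tailP μ Y x ≤ 1 := by
    intro Y x
    have := ENNReal.toReal_mono ENNReal.one_ne_top (prob_le_one (μ := μ) (s := {ω | x < Y ω}))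
    simpa [tailP] using this
  have msetle : ∀ (i : Fin n) (x : ℝ), MeasurableSet {ω | X i ω ≤ x} :=
    fun i x => measurableSet_le (hXm i) measurable_const
  have hTF : ∀ (i : Fin n) (x : ℝ), tailP μ (X i) x = 1 - F i x := by
    intro i x
    rw [hF]
    have hc : {ω | x < X i ω} = {ω | X i ω ≤ x}ᶜ := by
      ext ω; simp [Set.mem_setOf_eq, not_le]
    show (μ {ω | x < X i ω}).toReal = _
    rw [hc, prob_compl_eq_one_sub (msetle i x),
      ENNReal.toReal_sub_of_le prob_le_one ENNReal.one_ne_top, ENNReal.toReal_one]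
  have hF01 : ∀ (i : Fin n) (x : ℝ), 0 ≤ F i x ∧ F i x ≤ 1 := by
    intro i x
    have h1 := tail_nonneg (X i) x
    have h2 := tail_le_one (X i) x
    rw [hTF i x] at h1 h2
    constructor <;> linarith
  have hθFF : ∀ (i' j' : Fin n) (u v : ℝ), θ {i', j'} * F i' u * F j' v ≤ 1 := by
    intro i' j' u v
    have hFa : |F i' u| ≤ 1 := by rw [abs_of_nonneg (hF01 i' u).1]; exact (hF01 i' u).2
    have hFb : |F j' v| ≤ 1 := by rw [abs_of_nonneg (hF01 j' v).1]; exact (hF01 j' v).2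
    calc θ {i', j'} * F i' u * F j' v ≤ |θ {i', j'} * F i' u * F j' v| := le_abs_self _
    _ = |θ {i', j'}| * |F i' u| * |F j' v| := by rw [abs_mul, abs_mul]
    _ ≤ 1 * 1 * 1 :=
        mul_le_mul (mul_le_mul (hθ _) hFa (abs_nonneg _) zero_le_one) hFb (abs_nonneg _)
          (by norm_num)
    _ = 1 := by norm_num
  -- positivity and decay of marginal tails
  have hTpos : ∀ (i : Fin n) (x : ℝ), 0 < tailP μ (X i) x := fun i =>
    regvar_pos (tail_anti _) (tail_nonneg _) hα (hreg i)
  have hT0 : ∀ i : Fin n, Tendsto (tailP μ (X i)) atTop (𝓝 0) := fun i =>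
    regvar_tendsto_zero (tail_anti _) (hTpos i) hα (hreg i)
  -- comparison with the max tail
  have hTleG : ∀ (i : Fin n) (x : ℝ), tailP μ (X i) x ≤ tailP μ (maxRV X) x := by
    intro i x
    apply ENNReal.toReal_mono (measure_ne_top μ _)
    apply measure_mono
    intro ω hω
    simp only [Set.mem_setOf_eq] at hω ⊢
    exact lt_of_lt_of_le hω (le_ciSup (Set.finite_range fun m => X m ω).bddAbove i)
  have hGpos : ∀ x : ℝ, 0 < tailP μ (maxRV X) x :=
    fun x => lt_of_lt_of_le (hTpos 0 x) (hTleG 0 x)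
  -- max tail via the joint distribution
  have hGset : ∀ x : ℝ, {ω | x < maxRV X ω} = {ω | ∀ i, X i ω ≤ x}ᶜ := by
    intro x; ext ω
    simp only [Set.mem_setOf_eq, Set.mem_compl_iff, not_forall, not_le, maxRV]
    exact lt_ciSup_iff (Set.finite_range _).bddAbove
  have hGeq : ∀ x : ℝ, tailP μ (maxRV X) x = 1 - (μ {ω | ∀ i, X i ω ≤ x}).toReal := by
    intro x
    have hms : MeasurableSet {ω | ∀ i, X i ω ≤ x} := by
      have heq : {ω | ∀ i, X i ω ≤ x} = ⋂ i, {ω | X i ω ≤ x} := by ext ω; simp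
      rw [heq]; exact MeasurableSet.iInter fun i => msetle i x
    show (μ {ω | x < maxRV X ω}).toReal = _
    rw [hGset x, prob_compl_eq_one_sub hms,
      ENNReal.toReal_sub_of_le prob_le_one ENNReal.one_ne_top, ENNReal.toReal_one]
  -- the sum of marginal tails
  set Sm : ℝ → ℝ := fun x => ∑ i, tailP μ (X i) x with hSmdef
  have hSmpos : ∀ x, 0 < Sm x := fun x => Finset.sum_pos (fun i _ => hTpos i x) Finset.univ_nonempty
  have hSm0 : Tendsto Sm atTop (𝓝 0) := by
    have := tendsto_finset_sum Finset.univ (fun (i : Fin n) (_ : i ∈ Finset.univ) => hT0 i)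
    simpa using this
  have hTleS : ∀ (i : Fin n) (x : ℝ), tailP μ (X i) x ≤ Sm x := fun i x =>
    Finset.single_le_sum (fun m _ => tail_nonneg (X m) x) (Finset.mem_univ i)
  -- central estimate: |G - Sm| ≤ (1 + 2^n) Sm²
  have hGS : ∀ x : ℝ, |tailP μ (maxRV X) x - Sm x| ≤ (1 + 2 ^ n) * (Sm x * Sm x) := by
    intro x
    set P : ℝ := ∏ i, F i x with hPdef
    set Rx : ℝ := ∑ S ∈ Finset.univ.powerset.filter (fun S : Finset (Fin n) => 2 ≤ S.card),
      θ S * ∏ j ∈ S, (1 - F j x) with hRdef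
    have hGx : tailP μ (maxRV X) x = 1 - P * (1 + Rx) := by
      rw [hGeq x, hjoint (fun _ => x)]
    have hP0 : 0 ≤ P := Finset.prod_nonneg fun i _ => (hF01 i x).1
    have hP1 : P ≤ 1 := Finset.prod_le_one (fun i _ => (hF01 i x).1) (fun i _ => (hF01 i x).2)
    have hprodeq : P = ∏ i, (1 - tailP μ (X i) x) := by
      apply Finset.prod_congr rfl; intro i _; rw [hTF]; ring
    have hPlow : 1 - Sm x ≤ P := by
      have := one_sub_sum_le_prod_one_sub Finset.univ (fun i => tailP μ (X i) x)
        (fun i _ => tail_nonneg _ x) (fun i _ => tail_le_one _ x)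
      rw [hprodeq]
      simpa [hSmdef] using this
    have hPexp : P ≤ Real.exp (-Sm x) := by
      rw [hprodeq]
      calc ∏ i, (1 - tailP μ (X i) x) ≤ ∏ i, Real.exp (-(tailP μ (X i) x)) :=
            Finset.prod_le_prod (fun i _ => by linarith [tail_le_one (X i) x])
              (fun i _ => Real.one_sub_le_exp_neg _)
      _ = Real.exp (∑ i, -(tailP μ (X i) x)) := (Real.exp_sum _ _).symm
      _ = Real.exp (-Sm x) := by simp [hSmdef]
    have hexp_bound : Real.exp (-Sm x) ≤ 1 - Sm x + Sm x * Sm x := by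
      have h1 : Sm x + 1 ≤ Real.exp (Sm x) := Real.add_one_le_exp (Sm x)
      have hS := hSmpos x
      have hb : (0:ℝ) < 1 + Sm x := by linarith
      rw [Real.exp_neg]
      have h2 : (Real.exp (Sm x))⁻¹ ≤ (1 + Sm x)⁻¹ := by
        apply inv_anti₀ hb; linarith
      apply h2.trans
      rw [inv_eq_one_div, div_le_iff₀ hb]
      nlinarith
    have hRbound : |Rx| ≤ (2 ^ n : ℝ) * (Sm x * Sm x) := by
      have habs : |Rx| ≤ ∑ S ∈ Finset.univ.powerset.filter
          (fun S : Finset (Fin n) => 2 ≤ S.card), |θ S * ∏ j ∈ S, (1 - F j x)| :=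
        Finset.abs_sum_le_sum_abs _ _
      have hterm : ∀ S ∈ Finset.univ.powerset.filter (fun S : Finset (Fin n) => 2 ≤ S.card),
          |θ S * ∏ j ∈ S, (1 - F j x)| ≤ Sm x * Sm x := by
        intro S hS
        have hScard : 2 ≤ S.card := (Finset.mem_filter.mp hS).2
        obtain ⟨a, ha, b, hb, hab⟩ := Finset.one_lt_card.mp (by omega : 1 < S.card)
        have h1 : |∏ j ∈ S, (1 - F j x)| = ∏ j ∈ S, tailP μ (X j) x := by
          rw [Finset.abs_prod]
          apply Finset.prod_congr rfl
          intro j _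
          rw [show (1 : ℝ) - F j x = tailP μ (X j) x by rw [hTF],
            abs_of_pos (hTpos j x)]
        have hsub : ({a, b} : Finset (Fin n)) ⊆ S := by
          intro u hu
          rcases Finset.mem_insert.mp hu with h | h
          · rwa [h]
          · rw [Finset.mem_singleton.mp h]; exact hb
        have hprodle : ∏ j ∈ S, tailP μ (X j) x ≤ tailP μ (X a) x * tailP μ (X b) x := by
          rw [← Finset.prod_sdiff hsub, Finset.prod_pair hab]
          have hle1 : ∏ j ∈ S \ {a, b}, tailP μ (X j) x ≤ 1 :=
            Finset.prod_le_one (fun j _ => tail_nonneg _ _) (fun j _ => tail_le_one _ _)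
          have hnn : 0 ≤ tailP μ (X a) x * tailP μ (X b) x :=
            mul_nonneg (tail_nonneg _ _) (tail_nonneg _ _)
          nlinarith [Finset.prod_nonneg (fun j (_ : j ∈ S \ {a, b}) => tail_nonneg (X j) x)]
        have hSS : tailP μ (X a) x * tailP μ (X b) x ≤ Sm x * Sm x := by
          have := hTleS a x; have := hTleS b x
          nlinarith [tail_nonneg (X a) x, tail_nonneg (X b) x]
        rw [abs_mul, h1]
        have hprodnn : 0 ≤ ∏ j ∈ S, tailP μ (X j) x :=
          Finset.prod_nonneg fun j _ => tail_nonneg _ _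
        calc |θ S| * ∏ j ∈ S, tailP μ (X j) x ≤ 1 * ∏ j ∈ S, tailP μ (X j) x :=
              mul_le_mul_of_nonneg_right (hθ S) hprodnn
        _ = ∏ j ∈ S, tailP μ (X j) x := one_mul _
        _ ≤ tailP μ (X a) x * tailP μ (X b) x := hprodle
        _ ≤ Sm x * Sm x := hSS
      have hcard : ((Finset.univ.powerset.filter
          (fun S : Finset (Fin n) => 2 ≤ S.card)).card : ℝ) ≤ 2 ^ n := by
        have h1 : (Finset.univ.powerset.filter
            (fun S : Finset (Fin n) => 2 ≤ S.card)).card ≤ 2 ^ n := by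
          calc _ ≤ (Finset.univ  : Finset (Fin n)).powerset.card := Finset.card_filter_le _ _
          _ = 2 ^ n := by rw [Finset.card_powerset, Finset.card_univ, Fintype.card_fin]
        exact_mod_cast h1
      calc |Rx| ≤ _ := habs
      _ ≤ ∑ _S ∈ Finset.univ.powerset.filter (fun S : Finset (Fin n) => 2 ≤ S.card),
            Sm x * Sm x := Finset.sum_le_sum hterm
      _ = ((Finset.univ.powerset.filter
            (fun S : Finset (Fin n) => 2 ≤ S.card)).card : ℝ) * (Sm x * Sm x) := by
          rw [Finset.sum_const, nsmul_eq_mul]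
      _ ≤ (2 ^ n : ℝ) * (Sm x * Sm x) := by
          exact mul_le_mul_of_nonneg_right hcard
            (mul_nonneg (hSmpos x).le (hSmpos x).le)
    have hPRle : P * Rx ≤ |Rx| := by
      calc P * Rx ≤ |P * Rx| := le_abs_self _
      _ = P * |Rx| := by rw [abs_mul, abs_of_nonneg hP0]
      _ ≤ 1 * |Rx| := mul_le_mul_of_nonneg_right hP1 (abs_nonneg _)
      _ = |Rx| := one_mul _
    have hPRge : -|Rx| ≤ P * Rx := by
      have h : |P * Rx| ≤ |Rx| := by
        rw [abs_mul, abs_of_nonneg hP0]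
        calc P * |Rx| ≤ 1 * |Rx| := mul_le_mul_of_nonneg_right hP1 (abs_nonneg _)
        _ = |Rx| := one_mul _
      linarith [neg_abs_le (P * Rx), (abs_le.mp h).1]
    have hup : tailP μ (maxRV X) x - Sm x ≤ (1 + 2 ^ n) * (Sm x * Sm x) := by
      rw [hGx]
      nlinarith [hSmpos x, hRbound]
    have hlow : Sm x - tailP μ (maxRV X) x ≤ (1 + 2 ^ n) * (Sm x * Sm x) := by
      rw [hGx]
      nlinarith [hPexp.trans hexp_bound, hRbound]
    exact abs_le.mpr ⟨by linarith, by linarith⟩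
  -- G/Sm → 1
  have hGSratio : Tendsto (fun x => tailP μ (maxRV X) x / Sm x) atTop (𝓝 1) := by
    have h1 : Tendsto (fun x => tailP μ (maxRV X) x / Sm x - 1) atTop (𝓝 0) := by
      apply squeeze_zero_norm (a := fun x => (1 + 2 ^ n) * Sm x)
      · intro x
        have hS := hSmpos x
        have heq : tailP μ (maxRV X) x / Sm x - 1 = (tailP μ (maxRV X) x - Sm x) / Sm x := by
          field_simp
        rw [Real.norm_eq_abs, heq, abs_div, abs_of_pos hS, div_le_iff₀ hS]
        calc |tailP μ (maxRV X) x - Sm x| ≤ (1 + 2 ^ n) * (Sm x * Sm x) := hGS x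
        _ = (1 + 2 ^ n) * Sm x * Sm x := by ring
      · have := hSm0.const_mul ((1:ℝ) + 2 ^ n)
        simpa using this
    have := h1.add tendsto_const_nhds (b := (1:ℝ))
    simpa using this
  have hSinvG : Tendsto (fun x => Sm x / tailP μ (maxRV X) x) atTop (𝓝 1) := by
    have := hGSratio.inv₀ one_ne_zero
    simp only [inv_div, inv_one] at this
    exact this
  -- Sm is regularly varying
  have hSratio : ∀ y : ℝ, 0 < y → Tendsto (fun x => Sm (x * y) / Sm x) atTop (𝓝 (y ^ (-α))) := by
    intro y hy
    exact tendsto_sum_div_sum Finset.univ Finset.univ_nonempty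
      (fun i x => tailP μ (X i) (x * y)) (fun i x => tailP μ (X i) x) _
      (fun i _ x => hTpos i x) (fun i _ => hreg i y hy)
  -- G is regularly varying
  have hGreg : RegVarTail (tailP μ (maxRV X)) α := by
    intro y hy
    have hcomp : Tendsto (fun x : ℝ => x * y) atTop atTop := tendsto_id.atTop_mul_const hy
    have h1 : Tendsto (fun x => tailP μ (maxRV X) (x * y) / Sm (x * y)) atTop (𝓝 1) :=
      hGSratio.comp hcomp
    have hmul := (h1.mul (hSratio y hy)).mul hSinvG
    rw [show (1:ℝ) * y ^ (-α) * 1 = y ^ (-α) by ring] at hmul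
    apply hmul.congr
    intro x
    have h2 := (hSmpos (x * y)).ne'
    have h3 := (hSmpos x).ne'
    have h4 := (hGpos x).ne'
    field_simp
  have hGanti : Antitone (tailP μ (maxRV X)) := tail_anti _
  -- x^(p-1) → 0 helper (used repeatedly)
  have hrp : ∀ q : ℝ, q < 1 → Tendsto (fun x : ℝ => x ^ (q - 1)) atTop (𝓝 0) := by
    intro q hq
    have := tendsto_rpow_neg_atTop (by linarith : (0:ℝ) < 1 - q)
    simpa [show -(1 - q) = q - 1 by ring] using this
  -- F i → 0 at -∞
  have hFbot : ∀ m : Fin n, Tendsto (F m) atBot (𝓝 0) := by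
    intro m
    haveI : IsProbabilityMeasure (μ.map (X m)) := Measure.isProbabilityMeasure_map (hXm m).aemeasurable
    have hmap : ∀ y : ℝ, F m y = ProbabilityTheory.cdf (μ.map (X m)) y := by
      intro y
      rw [hF, ProbabilityTheory.cdf_eq_real, measureReal_def, Measure.map_apply (hXm m) measurableSet_Iic]
      rfl
    exact Tendsto.congr (fun y => (hmap y).symm) (ProbabilityTheory.tendsto_cdf_atBot _)
  refine ⟨hGreg, ⟨fun x _ => hGpos x, ?_⟩, ?_, ?_⟩
  · -- long-tailed
    intro y
    apply regvar_ratio_tendsto_one hGanti hGpos hα hGreg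
    have : Tendsto (fun x : ℝ => y * x⁻¹) atTop (𝓝 0) := by
      simpa using tendsto_inv_atTop_zero.const_mul y
    exact this.congr fun x => (div_eq_mul_inv y x).symm
  · -- dominated variation of G
    intro y hy
    obtain ⟨hl, hu⟩ := tendsto_coe_ereal_liminf_limsup (hGreg y hy)
    constructor
    · rw [hl]; exact_mod_cast Real.rpow_pos_of_pos hy (-α)
    · rw [hu]; exact EReal.coe_lt_top _
  intro p hp1 hp2
  have hp0 : (0:ℝ) < p := by linarith
  refine ⟨?_, ⟨?_, ?_, ?_, ?_⟩, ?_, ?_⟩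
  · -- DomVarFun x^p
    intro y hy
    have hten : Tendsto (fun x : ℝ => (x * y) ^ p / x ^ p) atTop (𝓝 (y ^ p)) := by
      have hev : ∀ᶠ x : ℝ in atTop, y ^ p = (x * y) ^ p / x ^ p := by
        filter_upwards [eventually_gt_atTop 0] with x hx
        rw [Real.mul_rpow hx.le hy.le, mul_comm, mul_div_assoc,
          div_self (ne_of_gt (Real.rpow_pos_of_pos hx p)), mul_one]
      exact Tendsto.congr' hev tendsto_const_nhds
    obtain ⟨hl, hu⟩ := tendsto_coe_ereal_liminf_limsup hten
    constructor
    · rw [hl]; exact_mod_cast Real.rpow_pos_of_pos hy p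
    · rw [hu]; exact EReal.coe_lt_top _
  · -- eventually positive
    filter_upwards [eventually_gt_atTop 0] with x hx
    exact Real.rpow_pos_of_pos hx p
  · -- little o
    rw [isLittleO_iff_tendsto' (by
      filter_upwards [eventually_gt_atTop 0] with x hx h
      exact absurd h (ne_of_gt hx))]
    apply (hrp p hp2).congr'
    filter_upwards [eventually_gt_atTop 0] with x hx
    rw [Real.rpow_sub hx, Real.rpow_one]
  · -- scale class tendsto
    intro y
    apply regvar_ratio_tendsto_one hGanti hGpos hα hGreg
    have h2 := (hrp p hp2).const_mul y
    rw [mul_zero] at h2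
    apply h2.congr'
    filter_upwards [eventually_gt_atTop 0] with x hx
    rw [mul_div_assoc, Real.rpow_sub hx, Real.rpow_one]
  · -- weakly self-neglecting
    intro y
    have hw : Tendsto (fun x : ℝ => 1 + y * x ^ (p - 1)) atTop (𝓝 1) := by
      have h2 := (hrp p hp2).const_mul y
      rw [mul_zero] at h2
      have := tendsto_const_nhds (x := (1:ℝ)) (f := atTop).add h2
      simpa using this
    have hrat : Tendsto (fun x : ℝ => (x + y * x ^ p) ^ p / x ^ p) atTop (𝓝 1) := by
      have hcont : ContinuousAt (fun z : ℝ => z ^ p) 1 :=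
        Real.continuousAt_rpow_const 1 p (Or.inl one_ne_zero)
      have h2 : Tendsto (fun x : ℝ => (1 + y * x ^ (p - 1)) ^ p) atTop (𝓝 1) := by
        have := hcont.tendsto.comp hw
        simpa [Real.one_rpow, Function.comp_def] using this
      apply h2.congr'
      filter_upwards [eventually_gt_atTop 0,
        hw.eventually_const_lt (show (0:ℝ) < 1 by norm_num)] with x hx hpos1
      have hxx : x * x ^ (p - 1) = x ^ p := by
        have h9 := (Real.rpow_add hx 1 (p - 1)).symm
        rw [Real.rpow_one] at h9
        rw [h9, show (1:ℝ) + (p - 1) = p by ring]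
      have hxeq : x + y * x ^ p = x * (1 + y * x ^ (p - 1)) := by
        calc x + y * x ^ p = x + y * (x * x ^ (p - 1)) := by rw [hxx]
        _ = x * (1 + y * x ^ (p - 1)) := by ring
      rw [hxeq, Real.mul_rpow hx.le hpos1.le,
        mul_comm (x ^ p) ((1 + y * x ^ (p - 1)) ^ p), mul_div_assoc,
        div_self (ne_of_gt (Real.rpow_pos_of_pos hx p)), mul_one]
    obtain ⟨_, hls⟩ := tendsto_coe_ereal_liminf_limsup hrat
    rw [show (fun x : ℝ => (((x + y * x ^ p) ^ p / x ^ p : ℝ) : EReal))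
      = fun x : ℝ => (((x + y * (fun x : ℝ => x ^ p) x) ^ p / (fun x : ℝ => x ^ p) x : ℝ) : EReal)
      from rfl] at hls
    rw [hls]
    exact EReal.coe_lt_top _
  · -- DS1
    intro t ht i j hij
    have hatop : Tendsto (fun x : ℝ => t * x ^ p) atTop atTop :=
      (tendsto_rpow_atTop hp0).const_mul_atTop ht
    have hna : Tendsto (fun x : ℝ => -(t * x ^ p)) atTop atBot := by
      rw [tendsto_neg_atBot_iff]; exact hatop
    set β : ℝ → ℝ := fun x =>
      1 - tailP μ (X i) (-(t * x ^ p)) * (1 + θ {i, j} * F i (-(t * x ^ p)) * F j x) with hβdef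
    have hFi0 : Tendsto (fun x : ℝ => F i (-(t * x ^ p))) atTop (𝓝 0) := (hFbot i).comp hna
    have hTneg1 : Tendsto (fun x : ℝ => tailP μ (X i) (-(t * x ^ p))) atTop (𝓝 1) := by
      have h1 := (tendsto_const_nhds : Tendsto (fun _ : ℝ => (1:ℝ)) atTop (𝓝 1)).sub hFi0
      rw [sub_zero] at h1
      exact h1.congr fun x => (hTF i _).symm
    have hθ0 : Tendsto (fun x : ℝ => θ {i, j} * F i (-(t * x ^ p)) * F j x) atTop (𝓝 0) := by
      apply squeeze_zero_norm (a := fun x : ℝ => F i (-(t * x ^ p))) _ hFi0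
      intro x
      rw [Real.norm_eq_abs, abs_mul, abs_mul]
      have h2 : |F i (-(t * x ^ p))| = F i (-(t * x ^ p)) := abs_of_nonneg (hF01 i _).1
      have h3 : |F j x| ≤ 1 := by
        rw [abs_of_nonneg (hF01 j x).1]; exact (hF01 j x).2
      rw [h2]
      have h0i := (hF01 i (-(t * x ^ p))).1
      calc |θ ({i, j} : Finset (Fin n))| * F i (-(t * x ^ p)) * |F j x|
          ≤ 1 * F i (-(t * x ^ p)) * 1 := by
            apply mul_le_mul (mul_le_mul_of_nonneg_right (hθ _) h0i) h3 (abs_nonneg _)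
            nlinarith
      _ = F i (-(t * x ^ p)) := by ring
    have hβ0 : Tendsto β atTop (𝓝 0) := by
      have h1 := (tendsto_const_nhds : Tendsto (fun _ : ℝ => (1:ℝ)) atTop (𝓝 1)).sub
        (hTneg1.mul ((tendsto_const_nhds : Tendsto (fun _ : ℝ => (1:ℝ)) atTop (𝓝 1)).add hθ0))
      rw [hβdef]
      simpa using h1
    have hβabs : Tendsto (fun x => |β x|) atTop (𝓝 0) := by
      have := hβ0.abs; simpa using this
    have htend : Tendsto (fun x : ℝ => 2 * tailP μ (X i) (t * x ^ p) + |β x|) atTop (𝓝 0) := by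
      have h1 := ((hT0 i).comp hatop).const_mul 2
      rw [mul_zero] at h1
      have := h1.add hβabs
      simpa using this
    refine squeeze_zero' (Eventually.of_forall fun x =>
      div_nonneg ENNReal.toReal_nonneg (hGpos x).le) (Eventually.of_forall fun x => ?_) htend
    have hGx := hGpos x
    rw [div_le_iff₀ hGx]
    have hsub : {ω | t * x ^ p < |X i ω| ∧ x < X j ω} ⊆
        {ω | t * x ^ p < X i ω ∧ x < X j ω} ∪ {ω | X i ω < -(t * x ^ p) ∧ x < X j ω} := by
      intro ω hω
      obtain ⟨h1, h2⟩ := hω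
      rcases lt_abs.mp h1 with h | h
      · exact Or.inl ⟨h, h2⟩
      · exact Or.inr ⟨by linarith, h2⟩
    have hreal : (μ {ω | t * x ^ p < |X i ω| ∧ x < X j ω}).toReal ≤
        (μ {ω | t * x ^ p < X i ω ∧ x < X j ω}).toReal +
        (μ {ω | X i ω < -(t * x ^ p) ∧ x < X j ω}).toReal := by
      calc (μ {ω | t * x ^ p < |X i ω| ∧ x < X j ω}).toReal
          ≤ ((μ {ω | t * x ^ p < X i ω ∧ x < X j ω}) +
             (μ {ω | X i ω < -(t * x ^ p) ∧ x < X j ω})).toReal := by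
            apply ENNReal.toReal_mono
              (ENNReal.add_ne_top.mpr ⟨measure_ne_top μ _, measure_ne_top μ _⟩)
            exact (measure_mono hsub).trans (measure_union_le _ _)
      _ = _ := ENNReal.toReal_add (measure_ne_top μ _) (measure_ne_top μ _)
    have hA1 : (μ {ω | t * x ^ p < X i ω ∧ x < X j ω}).toReal ≤
        2 * (tailP μ (X i) (t * x ^ p) * tailP μ (maxRV X) x) := by
      rw [hpair i j hij (t * x ^ p) x]
      have hfac : 1 + θ {i, j} * F i (t * x ^ p) * F j x ≤ 2 := by
        linarith [hθFF i j (t * x ^ p) x]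
      have hTT : 0 ≤ tailP μ (X i) (t * x ^ p) * tailP μ (X j) x :=
        mul_nonneg (tail_nonneg _ _) (tail_nonneg _ _)
      calc tailP μ (X i) (t * x ^ p) * tailP μ (X j) x *
            (1 + θ {i, j} * F i (t * x ^ p) * F j x)
          ≤ tailP μ (X i) (t * x ^ p) * tailP μ (X j) x * 2 :=
            mul_le_mul_of_nonneg_left hfac hTT
      _ ≤ 2 * (tailP μ (X i) (t * x ^ p) * tailP μ (maxRV X) x) := by
          nlinarith [hTleG j x, tail_nonneg (X i) (t * x ^ p)]
    have hA2 : (μ {ω | X i ω < -(t * x ^ p) ∧ x < X j ω}).toReal ≤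
        tailP μ (X j) x * |β x| := by
      have hseteq : {ω | X i ω < -(t * x ^ p) ∧ x < X j ω}
          = {ω | x < X j ω} \ {ω | -(t * x ^ p) ≤ X i ω} := by
        ext ω
        simp only [Set.mem_setOf_eq, Set.mem_diff, not_le]
        exact and_comm
      have hm : MeasurableSet {ω | -(t * x ^ p) ≤ X i ω} :=
        measurableSet_le measurable_const (hXm i)
      have hdiff := measure_diff_add_inter (μ := μ) {ω | x < X j ω} hm
      have htr : (μ ({ω | x < X j ω} \ {ω | -(t * x ^ p) ≤ X i ω})).toReal
          = tailP μ (X j) x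
            - (μ ({ω | x < X j ω} ∩ {ω | -(t * x ^ p) ≤ X i ω})).toReal := by
        have h5 := congrArg ENNReal.toReal hdiff
        rw [ENNReal.toReal_add (measure_ne_top μ _) (measure_ne_top μ _)] at h5
        have htp : tailP μ (X j) x = (μ {ω | x < X j ω}).toReal := rfl
        linarith
      have hsub2 : {ω | -(t * x ^ p) < X i ω ∧ x < X j ω} ⊆
          {ω | x < X j ω} ∩ {ω | -(t * x ^ p) ≤ X i ω} := by
        rintro ω ⟨h1, h2⟩
        exact ⟨h2, h1.le⟩
      have hge : tailP μ (X i) (-(t * x ^ p)) * tailP μ (X j) x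
            * (1 + θ {i, j} * F i (-(t * x ^ p)) * F j x)
          ≤ (μ ({ω | x < X j ω} ∩ {ω | -(t * x ^ p) ≤ X i ω})).toReal := by
        rw [← hpair i j hij (-(t * x ^ p)) x]
        exact ENNReal.toReal_mono (measure_ne_top μ _) (measure_mono hsub2)
      rw [hseteq, htr]
      have hβx : tailP μ (X j) x - tailP μ (X i) (-(t * x ^ p)) * tailP μ (X j) x
            * (1 + θ {i, j} * F i (-(t * x ^ p)) * F j x) = tailP μ (X j) x * β x := by
        simp only [hβdef]; ring
      calc tailP μ (X j) x - (μ ({ω | x < X j ω} ∩ {ω | -(t * x ^ p) ≤ X i ω})).toReal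
          ≤ tailP μ (X j) x - tailP μ (X i) (-(t * x ^ p)) * tailP μ (X j) x
            * (1 + θ {i, j} * F i (-(t * x ^ p)) * F j x) := by linarith
      _ = tailP μ (X j) x * β x := hβx
      _ ≤ tailP μ (X j) x * |β x| :=
          mul_le_mul_of_nonneg_left (le_abs_self _) (tail_nonneg _ _)
    calc (μ {ω | t * x ^ p < |X i ω| ∧ x < X j ω}).toReal ≤ _ := hreal
    _ ≤ 2 * (tailP μ (X i) (t * x ^ p) * tailP μ (maxRV X) x) + tailP μ (X j) x * |β x| :=
        add_le_add hA1 hA2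
    _ ≤ (2 * tailP μ (X i) (t * x ^ p) + |β x|) * tailP μ (maxRV X) x := by
        nlinarith [hTleG j x, abs_nonneg (β x), tail_nonneg (X j) x, hGx]
  · -- DS2
    intro i j hij
    have hij' : i ≠ j := ne_of_lt hij
    set ε : ℝ := α * (2 * p - 1) / (2 * (2 * p + 1)) with hεdef
    have hε : 0 < ε := by
      apply div_pos <;> nlinarith
    have hεα : ε < α := by
      rw [hεdef, div_lt_iff₀ (by nlinarith : (0:ℝ) < 2 * (2 * p + 1))]
      nlinarith
    obtain ⟨C, hC, hCev⟩ := potter_upper (tail_anti (X i)) (hTpos i) (hreg i) hε hεα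
    obtain ⟨C', hC', hC'ev⟩ := potter_upper (tail_anti (X j)) (hTpos j) (hreg j) hε hεα
    obtain ⟨c, hc, hcev⟩ := potter_lower (tail_anti (X j)) (hTpos j) hα (hreg j) hε
    have hexp : 2 * p * (ε - α) + (α + ε) < 0 := by
      have h5 : ε * (2 * (2 * p + 1)) = α * (2 * p - 1) := by
        rw [hεdef]; field_simp
      nlinarith
    have hptop : Tendsto (fun x : ℝ => x ^ p) atTop atTop := tendsto_rpow_atTop hp0
    have htend : Tendsto (fun x : ℝ => 2 * C * C' / c * x ^ (2 * p * (ε - α) + (α + ε)))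
        atTop (𝓝 0) := by
      have h6 := tendsto_rpow_neg_atTop (show (0:ℝ) < -(2 * p * (ε - α) + (α + ε)) by linarith)
      rw [neg_neg] at h6
      have := h6.const_mul (2 * C * C' / c)
      simpa using this
    refine squeeze_zero' (Eventually.of_forall fun x =>
      div_nonneg ENNReal.toReal_nonneg (hGpos x).le) ?_ htend
    filter_upwards [hptop.eventually hCev, hptop.eventually hC'ev, hcev, eventually_gt_atTop 1]
      with x hCx hC'x hcx hx1
    have hx0 : (0:ℝ) < x := lt_trans one_pos hx1
    have hGx := hGpos x
    have hnum : (μ {ω | 1 * x ^ p < X i ω ∧ 1 * x ^ p < X j ω}).toReal ≤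
        2 * (tailP μ (X i) (x ^ p) * tailP μ (X j) (x ^ p)) := by
      rw [hpair i j hij' (1 * x ^ p) (1 * x ^ p), one_mul]
      have hfac : 1 + θ {i, j} * F i (x ^ p) * F j (x ^ p) ≤ 2 := by
        linarith [hθFF i j (x ^ p) (x ^ p)]
      have hTT : 0 ≤ tailP μ (X i) (x ^ p) * tailP μ (X j) (x ^ p) :=
        mul_nonneg (tail_nonneg _ _) (tail_nonneg _ _)
      nlinarith
    have hchain : (μ {ω | 1 * x ^ p < X i ω ∧ 1 * x ^ p < X j ω}).toReal /
        tailP μ (maxRV X) x ≤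
        2 * (tailP μ (X i) (x ^ p) * tailP μ (X j) (x ^ p)) / tailP μ (X j) x :=
      div_le_div₀ (mul_nonneg (by norm_num) (mul_nonneg (tail_nonneg _ _) (tail_nonneg _ _)))
        hnum (hTpos j x) (hTleG j x)
    refine hchain.trans ?_
    have hTi : tailP μ (X i) (x ^ p) ≤ C * x ^ (p * (ε - α)) := by
      have h7 := hCx
      rwa [← Real.rpow_mul hx0.le] at h7
    have hTj : tailP μ (X j) (x ^ p) ≤ C' * x ^ (p * (ε - α)) := by
      have h7 := hC'x
      rwa [← Real.rpow_mul hx0.le] at h7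
    have hxp1 : x ^ (p * (ε - α)) * x ^ (p * (ε - α)) = x ^ (2 * p * (ε - α)) := by
      rw [← Real.rpow_add hx0]; ring_nf
    have hnum2 : 2 * (tailP μ (X i) (x ^ p) * tailP μ (X j) (x ^ p)) ≤
        2 * C * C' * x ^ (2 * p * (ε - α)) := by
      have h7 : tailP μ (X i) (x ^ p) * tailP μ (X j) (x ^ p) ≤
          (C * x ^ (p * (ε - α))) * (C' * x ^ (p * (ε - α))) :=
        mul_le_mul hTi hTj (tail_nonneg _ _) (by positivity)
      calc 2 * (tailP μ (X i) (x ^ p) * tailP μ (X j) (x ^ p))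
          ≤ 2 * ((C * x ^ (p * (ε - α))) * (C' * x ^ (p * (ε - α)))) := by linarith
      _ = 2 * C * C' * (x ^ (p * (ε - α)) * x ^ (p * (ε - α))) := by ring
      _ = 2 * C * C' * x ^ (2 * p * (ε - α)) := by rw [hxp1]
    calc 2 * (tailP μ (X i) (x ^ p) * tailP μ (X j) (x ^ p)) / tailP μ (X j) x
        ≤ (2 * C * C' * x ^ (2 * p * (ε - α))) / (c * x ^ (-(α + ε))) :=
          div_le_div₀ (by positivity) hnum2 (by positivity) hcx
    _ = 2 * C * C' / c * x ^ (2 * p * (ε - α) + (α + ε)) := by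
        rw [Real.rpow_add hx0 (2 * p * (ε - α)) (α + ε), Real.rpow_neg hx0.le]
        have h8 : (x:ℝ) ^ (α + ε) ≠ 0 := ne_of_gt (Real.rpow_pos_of_pos hx0 _)
        field_simp
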